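/- For a full-rank matrix X in R^{k x d} with k > d, det(X^T X) * (X^T X)^{-1} applied via Cramer's rule satisfies: the pseudoinverse decomposition X^+ = sum_{i=1}^k [(1 - x_i^T (X^T X)^{-1} x_i)/(k-d)] * (I_{-i} X)^+, where I_{-i} is the identity with the i-th diagonal entry set to 0 and x_i^T is the i-th row of X. -/

import Mathlib

open Matrix

set_option linter.unusedSectionVars false
set_option maxHeartbeats 1000000
variable {m n p q : Type*} [Fintype m] [Fintype n] [Fintype p] [Fintype q]

lemma vecMulVec_mul' (u : m → ℝ) (v : n → ℝ) (B : Matrix n p ℝ) :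
    vecMulVec u v * B = vecMulVec u (v ᵥ* B) := by
  ext a b
  simp [mul_apply, vecMulVec_apply, vecMul, dotProduct, Finset.mul_sum, mul_assoc]

lemma mul_vecMulVec' (B : Matrix m n ℝ) (u : n → ℝ) (v : p → ℝ) :
    B * vecMulVec u v = vecMulVec (B *ᵥ u) v := by
  ext a b
  simp [mul_apply, vecMulVec_apply, mulVec, dotProduct, Finset.sum_mul, mul_assoc]

lemma vecMul_vecMulVec' (w : m → ℝ) (u : m → ℝ) (v : n → ℝ) :
    w ᵥ* vecMulVec u v = (w ⬝ᵥ u) • v := by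
  ext b
  simp [vecMul, vecMulVec_apply, dotProduct, Finset.sum_mul, mul_assoc]

lemma vecMulVec_smul_right' (u : m → ℝ) (s : ℝ) (v : n → ℝ) :
    vecMulVec u (s • v) = s • vecMulVec u v := by
  ext a b; simp [vecMulVec_apply]; ring

lemma vecMulVec_sub_right' (u : m → ℝ) (v w : n → ℝ) :
    vecMulVec u (v - w) = vecMulVec u v - vecMulVec u w := by
  ext a b; simp [vecMulVec_apply]; ring

lemma mulVec_single_one' (X : Matrix m n ℝ) [DecidableEq m] (i : m) :
    Xᵀ *ᵥ Pi.single i (1:ℝ) = X i := by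
  ext a; simp [mulVec, dotProduct, Pi.single_apply]

lemma single_vecMul_one' (X : Matrix m n ℝ) [DecidableEq m] (i : m) :
    Pi.single i (1:ℝ) ᵥ* X = X i := by
  ext a; simp [vecMul, dotProduct, Pi.single_apply]

lemma transpose_mul_stdBasisMatrix (X : Matrix m n ℝ) [DecidableEq m] [DecidableEq n] (i : m) :
    Xᵀ * Matrix.single i i (1:ℝ) = vecMulVec (X i) (Pi.single i 1) := by
  rw [single_eq_single_vecMulVec_single, mul_vecMulVec', mulVec_single_one']

lemma sum_vecMulVec_single (X : Matrix m n ℝ) [DecidableEq m] :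
    ∑ i, vecMulVec (X i) (Pi.single i (1:ℝ)) = Xᵀ := by
  ext a b
  simp [Matrix.sum_apply, vecMulVec_apply, Pi.single_apply]

lemma sum_vecMulVec_mulVec (X : Matrix m n ℝ) (B : Matrix p n ℝ) :
    ∑ i, vecMulVec (X i) (B *ᵥ X i) = Xᵀ * X * Bᵀ := by
  ext a b
  simp only [Matrix.sum_apply, vecMulVec_apply, mulVec, dotProduct, mul_apply,
    transpose_apply, Finset.mul_sum, Finset.sum_mul]
  rw [Finset.sum_comm]
  refine Finset.sum_congr rfl fun c _ => ?_
  refine Finset.sum_congr rfl fun i _ => ?_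
  ring

/-- Moore–Penrose pseudoinverse of a full column rank matrix. -/
noncomputable def pinv {k d : ℕ} (X : Matrix (Fin k) (Fin d) ℝ) :
    Matrix (Fin d) (Fin k) ℝ :=
  (Xᵀ * X)⁻¹ * Xᵀ

lemma term_key {k d : ℕ} (X : Matrix (Fin k) (Fin d) ℝ) (hA : IsUnit (Xᵀ * X)) (i : Fin k) :
    (1 - X i ⬝ᵥ ((Xᵀ * X)⁻¹ *ᵥ X i)) • pinv (((1 : Matrix (Fin k) (Fin k) ℝ) - Matrix.single i i 1) * X) =
      (1 - X i ⬝ᵥ ((Xᵀ * X)⁻¹ *ᵥ X i)) • ((Xᵀ * X)⁻¹ * Xᵀ) +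
      (Xᵀ * X)⁻¹ * vecMulVec (X i) (X *ᵥ ((Xᵀ * X)⁻¹ *ᵥ X i) - Pi.single i 1) := by
  set A := Xᵀ * X with hAdef
  have hAdet : IsUnit A.det := (isUnit_iff_isUnit_det A).mp hA
  have hAsymm : Aᵀ = A := by rw [hAdef, transpose_mul, transpose_transpose]
  have hAinvsymm : A⁻¹ᵀ = A⁻¹ := by rw [transpose_nonsing_inv, hAsymm]
  have hAAinv : A * A⁻¹ = 1 := mul_nonsing_inv A hAdet
  have hAinvA : A⁻¹ * A = 1 := nonsing_inv_mul A hAdet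
  set x := X i with hxdef
  set z : Fin d → ℝ := A⁻¹ *ᵥ x with hzdef
  set h : ℝ := x ⬝ᵥ z with hhdef
  set u : Fin k → ℝ := X *ᵥ z with hudef
  set e : Fin k → ℝ := Pi.single i 1 with hedef
  set M := vecMulVec x x with hMdef
  set E := Matrix.single i i (1:ℝ) with hEdef
  set Y := ((1 : Matrix (Fin k) (Fin k) ℝ) - E) * X with hYdef
  -- basic facts
  have hXtE : Xᵀ * E = vecMulVec x e := transpose_mul_stdBasisMatrix X i
  have hEt : Eᵀ = E := by
    rw [hEdef]; ext a b; simp [Matrix.single, and_comm]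
  have hE2 : E * E = E := by rw [hEdef, single_mul_single_same, one_mul]
  have hEE : ((1 : Matrix (Fin k) (Fin k) ℝ) - E) * (1 - E) = 1 - E := by
    rw [Matrix.mul_sub, Matrix.mul_one, Matrix.sub_mul, Matrix.one_mul, hE2]; abel
  have heX : e ᵥ* X = x := single_vecMul_one' X i
  have hYt : Yᵀ = Xᵀ - vecMulVec x e := by
    rw [hYdef, transpose_mul, transpose_sub, transpose_one, hEt, Matrix.mul_sub,
      Matrix.mul_one, hXtE]
  have hXtEX : Xᵀ * E * X = M := by
    rw [hXtE, vecMulVec_mul', heX, hMdef]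
  have hYtY : Yᵀ * Y = A - M := by
    rw [hYdef, transpose_mul, transpose_sub, transpose_one, hEt, Matrix.mul_assoc,
      ← Matrix.mul_assoc (1 - E) (1 - E) X, hEE, ← Matrix.mul_assoc, Matrix.mul_sub,
      Matrix.mul_one, Matrix.sub_mul, hXtEX, hAdef]
  have hxvA : x ᵥ* A⁻¹ = z := by rw [← hAinvsymm, vecMul_transpose, hzdef]
  have hzx : z ⬝ᵥ x = h := by rw [hhdef, dotProduct_comm]
  have hMAM : M * A⁻¹ * M = h • M := by
    rw [hMdef, vecMulVec_mul', hxvA, vecMulVec_mul', vecMul_vecMulVec', hzx,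
      vecMulVec_smul_right']
  have hXtu : Xᵀ *ᵥ u = x := by
    rw [hudef, mulVec_mulVec, ← hAdef, hzdef, mulVec_mulVec, hAAinv, one_mulVec]
  have hui : u i = h := by
    rw [hhdef]; rfl
  have huu : u ⬝ᵥ u = h := by
    conv_lhs => rw [hudef]
    rw [dotProduct_comm (X *ᵥ z) u, dotProduct_mulVec, ← mulVec_transpose, hXtu, hhdef,
      dotProduct_comm]
  have hMAXt : M * (A⁻¹ * Xᵀ) = vecMulVec x u := by
    rw [hMdef, vecMulVec_mul', ← vecMul_vecMul, hxvA, vecMul_transpose, ← hudef]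
  have hMAe : M * (A⁻¹ * vecMulVec x e) = h • vecMulVec x e := by
    rw [mul_vecMulVec', ← hzdef, hMdef, vecMulVec_mul', vecMul_vecMulVec', hhdef,
      vecMulVec_smul_right']
  by_cases hc : h = 1
  · -- degenerate case: the leverage is 1 and u = e
    have hue : u - e = 0 := by
      have he_u : e ⬝ᵥ u = h := by rw [hedef, single_dotProduct, one_mul]; exact hui
      have hu_e : u ⬝ᵥ e = h := by rw [hedef, dotProduct_single, mul_one]; exact hui
      have he_e : e ⬝ᵥ e = 1 := by rw [hedef, single_dotProduct, one_mul]; simp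
      refine dotProduct_self_eq_zero.mp ?_
      rw [sub_dotProduct, dotProduct_sub, dotProduct_sub, huu, he_u, hu_e, he_e, hc]
      ring
    rw [hc, sub_self, zero_smul, zero_smul, zero_add, hue]
    have : vecMulVec x (0 : Fin k → ℝ) = 0 := by ext a b; simp [vecMulVec_apply]
    rw [this, Matrix.mul_zero]
  · -- Sherman–Morrison case
    have h1 : (1 : ℝ) - h ≠ 0 := sub_ne_zero_of_ne (fun hh => hc hh.symm)
    set c : ℝ := (1 - h)⁻¹ with hcdef
    have hc1 : c * (1 - h) = 1 := inv_mul_cancel₀ h1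
    have hBinv : (A - M)⁻¹ = A⁻¹ + c • (A⁻¹ * (M * A⁻¹)) := by
      apply inv_eq_right_inv
      have e1 : M * (A⁻¹ * (M * A⁻¹)) = h • (M * A⁻¹) := by
        rw [← Matrix.mul_assoc, ← Matrix.mul_assoc, hMAM, Matrix.smul_mul]
      simp only [Matrix.sub_mul, Matrix.mul_add, mul_smul_comm, e1,
        mul_nonsing_inv_cancel_left _ _ hAdet, hAAinv]
      have e2 : M * A⁻¹ - h • (M * A⁻¹) = (1 - h) • (M * A⁻¹) := by
        rw [sub_smul, one_smul]
      rw [e2, smul_smul, hc1, one_smul]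
      abel
    have hpinvY : pinv Y = (A - M)⁻¹ * Yᵀ := by rw [pinv, hYtY]
    rw [hpinvY, hBinv, hYt]
    have e2 : vecMulVec x (u - e) = vecMulVec x u - vecMulVec x e := vecMulVec_sub_right' _ _ _
    rw [e2]
    simp only [Matrix.mul_sub, Matrix.add_mul, Matrix.smul_mul, Matrix.mul_assoc, hMAXt, hMAe,
      mul_smul_comm, smul_sub, smul_add, smul_smul]
    have hch : (1 - h) * c = 1 := by rw [mul_comm]; exact hc1
    rw [hch, one_smul]
    simp only [one_smul, mul_smul_comm]
    rw [Matrix.mul_smul]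
    have hQ : (1 - h) • (A⁻¹ * vecMulVec x e) + h • (A⁻¹ * vecMulVec x e)
        = A⁻¹ * vecMulVec x e := by
      rw [← add_smul, sub_add_cancel, one_smul]
    rw [hQ]
    abel

lemma trace_vecMulVec' (u v : n → ℝ) : trace (vecMulVec u v) = u ⬝ᵥ v := by
  simp [trace, vecMulVec_apply, dotProduct, Matrix.diag]

lemma isUnit_transpose_mul_self' {k d : ℕ} (X : Matrix (Fin k) (Fin d) ℝ)
    (hrank : X.rank = d) : IsUnit (Xᵀ * X) := by
  rw [← Matrix.mulVec_injective_iff_isUnit]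
  have hker : LinearMap.ker (Xᵀ * X).mulVecLin = ⊥ := by
    rw [Matrix.ker_mulVecLin_transpose_mul_self]
    have hrn := LinearMap.finrank_range_add_finrank_ker (X.mulVecLin)
    rw [Matrix.rank] at hrank
    rw [hrank] at hrn
    simp only [Module.finrank_pi, Fintype.card_fin] at hrn
    have h0 : Module.finrank ℝ (LinearMap.ker X.mulVecLin) = 0 := by omega
    exact Submodule.finrank_eq_zero.mp h0
  have := LinearMap.ker_eq_bot.mp hker
  intro a b hab
  exact this hab

/-- Pseudoinverse decomposition: `X⁺ = ∑ᵢ (1 - xᵢᵀ(XᵀX)⁻¹xᵢ)/(k-d) • (I₋ᵢX)⁺`. -/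
theorem stmt3 (d n : ℕ) (hd : 0 < d) (hdn : d < n + 1)
    (X : Matrix (Fin (n + 1)) (Fin d) ℝ) (hrank : X.rank = d) :
    pinv X =
      ∑ i : Fin (n + 1),
        ((1 - X i ⬝ᵥ ((Xᵀ * X)⁻¹ *ᵥ X i)) / ((n + 1 : ℝ) - d)) •
          pinv (((1 : Matrix (Fin (n + 1)) (Fin (n + 1)) ℝ) - Matrix.single i i 1) * X) := by
  have hA : IsUnit (Xᵀ * X) := isUnit_transpose_mul_self' X hrank
  set A := Xᵀ * X with hAdef
  have hAdet : IsUnit A.det := (isUnit_iff_isUnit_det A).mp hA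
  have hAsymm : Aᵀ = A := by rw [hAdef, transpose_mul, transpose_transpose]
  have hAinvsymm : A⁻¹ᵀ = A⁻¹ := by rw [transpose_nonsing_inv, hAsymm]
  have hAAinv : A * A⁻¹ = 1 := mul_nonsing_inv A hAdet
  set c : ℝ := (n + 1 : ℝ) - d with hcdef
  have hc0 : c ≠ 0 := by
    rw [hcdef]
    have : (d : ℝ) < (n + 1 : ℝ) := by exact_mod_cast hdn
    intro hcontra
    linarith
  -- sum of leverages equals d
  have hsum_h : ∑ i, X i ⬝ᵥ (A⁻¹ *ᵥ X i) = (d : ℝ) := by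
    have e1 : ∑ i, X i ⬝ᵥ (A⁻¹ *ᵥ X i)
        = trace (∑ i, vecMulVec (X i) (A⁻¹ *ᵥ X i)) := by
      rw [trace_sum]
      exact Finset.sum_congr rfl fun i _ => (trace_vecMulVec' _ _).symm
    rw [e1, sum_vecMulVec_mulVec, hAinvsymm, ← hAdef, hAAinv, trace_one]
    simp
  have hcoef : ∑ i, (1 - X i ⬝ᵥ (A⁻¹ *ᵥ X i)) = c := by
    rw [Finset.sum_sub_distrib, hsum_h, hcdef]
    simp [Finset.card_univ]
  -- sum of corrections vanishes
  have hcorr : ∑ i, vecMulVec (X i) (X *ᵥ (A⁻¹ *ᵥ X i) - Pi.single i 1) = 0 := by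
    simp only [vecMulVec_sub_right', Finset.sum_sub_distrib, sum_vecMulVec_single,
      mulVec_mulVec, sum_vecMulVec_mulVec, transpose_mul, hAinvsymm, ← hAdef]
    rw [mul_nonsing_inv_cancel_left A Xᵀ hAdet, sub_self]
  -- assemble
  symm
  calc ∑ i : Fin (n + 1), ((1 - X i ⬝ᵥ (A⁻¹ *ᵥ X i)) / c) •
          pinv (((1 : Matrix (Fin (n + 1)) (Fin (n + 1)) ℝ) - Matrix.single i i 1) * X)
      = c⁻¹ • ∑ i : Fin (n + 1), (1 - X i ⬝ᵥ (A⁻¹ *ᵥ X i)) •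
          pinv (((1 : Matrix (Fin (n + 1)) (Fin (n + 1)) ℝ) - Matrix.single i i 1) * X) := by
        rw [Finset.smul_sum]
        exact Finset.sum_congr rfl fun i _ => by rw [smul_smul, ← div_eq_inv_mul]
    _ = c⁻¹ • ∑ i : Fin (n + 1), ((1 - X i ⬝ᵥ (A⁻¹ *ᵥ X i)) • (A⁻¹ * Xᵀ) +
          A⁻¹ * vecMulVec (X i) (X *ᵥ (A⁻¹ *ᵥ X i) - Pi.single i 1)) := by
        congr 1
        exact Finset.sum_congr rfl fun i _ => term_key X hA i
    _ = c⁻¹ • (c • (A⁻¹ * Xᵀ) + A⁻¹ * (0 : Matrix (Fin d) (Fin (n+1)) ℝ)) := by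
        rw [Finset.sum_add_distrib, ← Finset.sum_smul, hcoef, ← Matrix.mul_sum, hcorr]
    _ = A⁻¹ * Xᵀ := by
        rw [Matrix.mul_zero, add_zero, smul_smul, inv_mul_cancel₀ hc0, one_smul]
    _ = pinv X := rfl
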